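/- arXiv:2309.05377 — 8 statements merged into one kernel-verified Lean document; each statement's English description precedes it below -/
import Mathlib

section
/- For every n ≥ 1, every k ∈ {1, …, n}, every profile s = (s_1, …, s_n) ∈ ℝ^n, every agent i, and every misreport s_i' ∈ ℝ, it holds that min(1, |o_k(s) − s_i|) ≤ min(1, |o_k(s_{-i}, s_i') − s_i|); that is, every k-th ordered statistic mechanism is truthful in the unit-length Truthful Interval Covering model. -/
/-- The `k`-th ordered statistic (0-indexed) of a profile `s` of left endpoints:
the value of `s` at the `k`-th position after sorting in non-decreasing order. -/
noncomputable def oStat {n : ℕ} (s : Fin n → ℝ) (k : Fin n) : ℝ :=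
  s (Tuple.sort s k)

private lemma card_comp_perm {n : ℕ} (s : Fin n → ℝ) (σ : Equiv.Perm (Fin n))
    (p : ℝ → Prop) [DecidablePred p] :
    (Finset.univ.filter fun j => p (s (σ j))).card
      = (Finset.univ.filter fun j => p (s j)).card := by
  apply Finset.card_equiv σ
  intro j
  simp

private lemma mono_count_le {n : ℕ} (f : Fin n → ℝ) (hf : Monotone f) (k : Fin n) (a : ℝ) :
    f k ≤ a ↔ k.val + 1 ≤ (Finset.univ.filter fun j => f j ≤ a).card := by
  constructor
  · intro h
    have hsub : Finset.Iic k ⊆ Finset.univ.filter fun j => f j ≤ a := by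
      intro j hj
      simp only [Finset.mem_Iic] at hj
      simp only [Finset.mem_filter, Finset.mem_univ, true_and]
      exact le_trans (hf hj) h
    calc k.val + 1 = (Finset.Iic k).card := by simp [Fin.card_Iic]
      _ ≤ _ := Finset.card_le_card hsub
  · intro h
    by_contra hc
    push_neg at hc
    have hsub : (Finset.univ.filter fun j => f j ≤ a) ⊆ Finset.Iio k := by
      intro j hj
      simp only [Finset.mem_filter, Finset.mem_univ, true_and] at hj
      simp only [Finset.mem_Iio]
      by_contra hjk
      push_neg at hjk
      exact absurd (le_trans (hf hjk) hj) (not_le.mpr hc)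
    have := Finset.card_le_card hsub
    rw [Fin.card_Iio] at this
    omega

private lemma mono_count_lt {n : ℕ} (f : Fin n → ℝ) (hf : Monotone f) (k : Fin n) (a : ℝ) :
    a ≤ f k ↔ (Finset.univ.filter fun j => f j < a).card ≤ k.val := by
  constructor
  · intro h
    have hsub : (Finset.univ.filter fun j => f j < a) ⊆ Finset.Iio k := by
      intro j hj
      simp only [Finset.mem_filter, Finset.mem_univ, true_and] at hj
      simp only [Finset.mem_Iio]
      by_contra hjk
      push_neg at hjk
      exact absurd (lt_of_lt_of_le hj h) (not_lt.mpr (hf hjk))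
    have := Finset.card_le_card hsub
    rwa [Fin.card_Iio] at this
  · intro h
    by_contra hc
    push_neg at hc
    have hsub : Finset.Iic k ⊆ Finset.univ.filter fun j => f j < a := by
      intro j hj
      simp only [Finset.mem_Iic] at hj
      simp only [Finset.mem_filter, Finset.mem_univ, true_and]
      exact lt_of_le_of_lt (hf hj) hc
    have := Finset.card_le_card hsub
    rw [Fin.card_Iic] at this
    omega

/-- Counting characterization of the order statistic: `oStat s k ≤ a` iff at least
`k+1` entries are `≤ a`. -/
private lemma oStat_le_iff {n : ℕ} (s : Fin n → ℝ) (k : Fin n) (a : ℝ) :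
    oStat s k ≤ a ↔ k.val + 1 ≤ (Finset.univ.filter fun j => s j ≤ a).card := by
  have h := mono_count_le (s ∘ Tuple.sort s) (Tuple.monotone_sort s) k a
  simpa [oStat, card_comp_perm s (Tuple.sort s) (fun x => x ≤ a)] using h

/-- Counting characterization: `a ≤ oStat s k` iff at most `k` entries are `< a`. -/
private lemma le_oStat_iff {n : ℕ} (s : Fin n → ℝ) (k : Fin n) (a : ℝ) :
    a ≤ oStat s k ↔ (Finset.univ.filter fun j => s j < a).card ≤ k.val := by
  have h := mono_count_lt (s ∘ Tuple.sort s) (Tuple.monotone_sort s) k a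
  simpa [oStat, card_comp_perm s (Tuple.sort s) (fun x => x < a)] using h

/-- Every `k`-th ordered statistic mechanism is truthful in the unit-length
Truthful Interval Covering model: no agent `i` can decrease her cost
`min 1 |c - s i|` by misreporting her left endpoint. -/
theorem kth_ordered_statistic_truthful (n : ℕ) (hn : 1 ≤ n) (k : Fin n)
    (s : Fin n → ℝ) (i : Fin n) (s' : ℝ) :
    min 1 |oStat s k - s i| ≤ min 1 |oStat (Function.update s i s') k - s i| := by
  set o := oStat s k with ho
  set u := Function.update s i s' with hu
  set o' := oStat u k with ho'
  have key : |o - s i| ≤ |o' - s i| := by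
    rcases lt_trichotomy (s i) o with h | h | h
    · -- s i < o : show o ≤ o'
      have hcount : (Finset.univ.filter fun j => s j < o).card ≤ k.val :=
        (le_oStat_iff s k o).mp le_rfl
      have hsub : (Finset.univ.filter fun j => u j < o)
          ⊆ (Finset.univ.filter fun j => s j < o) := by
        intro j hj
        simp only [Finset.mem_filter, Finset.mem_univ, true_and] at hj ⊢
        by_cases hji : j = i
        · subst hji; exact h
        · rwa [hu, Function.update_of_ne hji] at hj
      have hoo' : o ≤ o' :=
        (le_oStat_iff u k o).mpr (le_trans (Finset.card_le_card hsub) hcount)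
      rw [abs_of_pos (by linarith), abs_of_pos (by linarith)]
      linarith
    · simp [h]
    · -- o < s i : show o' ≤ o
      have hcount : k.val + 1 ≤ (Finset.univ.filter fun j => s j ≤ o).card :=
        (oStat_le_iff s k o).mp le_rfl
      have hsub : (Finset.univ.filter fun j => s j ≤ o)
          ⊆ (Finset.univ.filter fun j => u j ≤ o) := by
        intro j hj
        simp only [Finset.mem_filter, Finset.mem_univ, true_and] at hj ⊢
        have hji : j ≠ i := by
          rintro rfl
          exact absurd hj (not_le.mpr h)
        rwa [hu, Function.update_of_ne hji]
      have hoo' : o' ≤ o :=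
        (oStat_le_iff u k o).mpr (le_trans hcount (Finset.card_le_card hsub))
      rw [abs_of_neg (by linarith), abs_of_neg (by linarith)]
      linarith
  exact min_le_min le_rfl key
end

section
/- For every n ≥ 1, every vector of probabilities p_1, …, p_n ≥ 0 with Σ_k p_k = 1, every profile s ∈ ℝ^n, every agent i, and every misreport s_i' ∈ ℝ, it holds that Σ_{k=1}^n p_k · min(1, |o_k(s) − s_i|) ≤ Σ_{k=1}^n p_k · min(1, |o_k(s_{-i}, s_i') − s_i|); that is, every convex combination of k-th ordered statistic mechanisms is truthful in expectation (indeed universally truthful) in the unit-length Truthful Interval Covering model. -/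
namespace TICaux

/-- Number of entries of `s` that are `≤ t`. -/
noncomputable def N {n : ℕ} (s : Fin n → ℝ) (t : ℝ) : ℕ :=
  (Finset.univ.filter (fun j => s j ≤ t)).card

lemma N_mono {n : ℕ} (s : Fin n → ℝ) {t t' : ℝ} (h : t ≤ t') : N s t ≤ N s t' := by
  apply Finset.card_le_card
  intro j hj
  simp only [Finset.mem_filter, Finset.mem_univ, true_and] at *
  linarith

/-- Counting characterization of the ordered statistics. -/
lemma oStat_le_iff {n : ℕ} (s : Fin n → ℝ) (k : Fin n) (t : ℝ) :
    oStat s k ≤ t ↔ (k : ℕ) < N s t := by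
  classical
  have hperm : (Finset.univ.filter (fun j => s j ≤ t))
      = (Finset.univ.filter (fun m => oStat s m ≤ t)).map
          (Tuple.sort s).toEmbedding := by
    ext j
    simp only [Finset.mem_map_equiv, Finset.mem_filter, Finset.mem_univ, true_and]
    simp [oStat]
  have hN : N s t = (Finset.univ.filter (fun m => oStat s m ≤ t)).card := by
    rw [N, hperm, Finset.card_map]
  have hmono : Monotone (oStat s) := Tuple.monotone_sort s
  rw [hN]
  constructor
  · intro hle
    have hsub : Finset.Iic k ⊆ Finset.univ.filter (fun m => oStat s m ≤ t) := by
      intro m hm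
      simp only [Finset.mem_Iic] at hm
      simp only [Finset.mem_filter, Finset.mem_univ, true_and]
      exact le_trans (hmono hm) hle
    have := Finset.card_le_card hsub
    simpa using lt_of_lt_of_le (Nat.lt_succ_self k) (by simpa using this)
  · intro hlt
    by_contra h
    push_neg at h
    have hsub : Finset.univ.filter (fun m => oStat s m ≤ t) ⊆ Finset.Iio k := by
      intro m hm
      simp only [Finset.mem_filter, Finset.mem_univ, true_and] at hm
      simp only [Finset.mem_Iio]
      by_contra hmk
      push_neg at hmk
      exact absurd (le_trans (hmono hmk) hm) (not_le.mpr h)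
    have := Finset.card_le_card hsub
    simp only [Fin.card_Iio] at this
    omega

/-- How the count changes when agent `i` replaces `s i` by `s'`. -/
lemma N_update {n : ℕ} (s : Fin n → ℝ) (i : Fin n) (s' : ℝ) (t : ℝ) :
    N (Function.update s i s') t + (if s i ≤ t then 1 else 0)
      = N s t + (if s' ≤ t then 1 else 0) := by
  classical
  simp only [N, Finset.card_filter]
  rw [Fintype.sum_eq_add_sum_compl i, Fintype.sum_eq_add_sum_compl i
    (fun j => if s j ≤ t then 1 else 0)]
  have hrest : ∑ j ∈ ({i}ᶜ : Finset (Fin n)), (if Function.update s i s' j ≤ t then 1 else 0)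
      = ∑ j ∈ ({i}ᶜ : Finset (Fin n)), (if s j ≤ t then 1 else 0) := by
    apply Finset.sum_congr rfl
    intro j hj
    have : j ≠ i := by simpa using hj
    rw [Function.update_of_ne this]
  rw [hrest, Function.update_self]
  ring

/-- Pointwise truthfulness: each ordered statistic can only move away from `s i`
when agent `i` misreports. -/
lemma key {n : ℕ} (s : Fin n → ℝ) (i : Fin n) (s' : ℝ) (k : Fin n) :
    min 1 |oStat s k - s i| ≤ min 1 |oStat (Function.update s i s') k - s i| := by
  set u := Function.update s i s' with hu
  set a := oStat s k with ha
  set b := oStat u k with hb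
  rcases lt_trichotomy a b with hab | hab | hab
  · have hia : s i ≤ a := by
      by_contra h
      push_neg at h
      have h1 : (k : ℕ) < N s a := (oStat_le_iff s k a).1 le_rfl
      have h2 : (k : ℕ) < N u a := by
        have heq := N_update s i s' a
        have hsi : ¬ s i ≤ a := not_le.mpr h
        rw [← hu] at heq
        simp only [hsi, if_false] at heq
        split_ifs at heq <;> omega
      exact absurd ((oStat_le_iff u k a).2 h2) (not_le.mpr hab)
    have habs : |a - s i| ≤ |b - s i| := by
      rw [abs_of_nonneg (by linarith), abs_of_nonneg (by linarith)]
      linarith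
    exact min_le_min le_rfl habs
  · rw [hab]
  · have hia : a ≤ s i := by
      by_contra h
      push_neg at h
      set t := max b (s i) with ht
      have htlt : t < a := max_lt hab h
      have h1 : (k : ℕ) < N u b := (oStat_le_iff u k b).1 le_rfl
      have h2 : (k : ℕ) < N u t := lt_of_lt_of_le h1 (N_mono u (le_max_left _ _))
      have h3 : (k : ℕ) < N s t := by
        have heq := N_update s i s' t
        have hsi : s i ≤ t := le_max_right _ _
        rw [← hu] at heq
        simp only [hsi, if_true] at heq
        split_ifs at heq <;> omega
      exact absurd ((oStat_le_iff s k t).2 h3) (not_le.mpr htlt)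
    have habs : |a - s i| ≤ |b - s i| := by
      rw [abs_of_nonpos (by linarith), abs_of_nonpos (by linarith)]
      linarith
    exact min_le_min le_rfl habs

end TICaux

/-- Every convex combination of `k`-th ordered statistic mechanisms is truthful
(in expectation) in the unit-length Truthful Interval Covering model: no agent `i`
can decrease her expected cost by misreporting her left endpoint. -/
theorem convex_comb_ordered_statistics_truthful (n : ℕ) (hn : 1 ≤ n)
    (p : Fin n → ℝ) (hp : ∀ k, 0 ≤ p k) (hsum : ∑ k, p k = 1)
    (s : Fin n → ℝ) (i : Fin n) (s' : ℝ) :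
    ∑ k, p k * min 1 |oStat s k - s i| ≤
      ∑ k, p k * min 1 |oStat (Function.update s i s') k - s i| := by
  apply Finset.sum_le_sum
  intro k _
  exact mul_le_mul_of_nonneg_left (TICaux.key s i s' k) (hp k)
end

section
/- Let n ≥ 1, let [a_1, b_1], …, [a_n, b_n] be closed intervals with a_i ≤ b_i for all i, and let L > 0 be the length of the covering interval. Define the social cost of a position c ∈ ℝ as SC(c) = Σ_{i=1}^n ((b_i − a_i) − max(0, min(b_i, c + L) − max(a_i, c))). Then there exists a position c* belonging to the finite set {a_1, …, a_n} ∪ {b_1 − L, …, b_n − L} such that SC(c*) ≤ SC(c) for every c ∈ ℝ; i.e., some social-cost-minimizing covering interval starts at a left endpoint or ends at a right endpoint of an agent's interval. -/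
lemma max0_conv (u v t : ℝ) (ht0 : 0 ≤ t) (ht1 : t ≤ 1) :
    max 0 (t*u + (1-t)*v) ≤ t * max 0 u + (1-t) * max 0 v := by
  have h1 : (0:ℝ) ≤ max 0 u := le_max_left _ _
  have h2 : (0:ℝ) ≤ max 0 v := le_max_left _ _
  have h3 : u ≤ max 0 u := le_max_right _ _
  have h4 : v ≤ max 0 v := le_max_right _ _
  apply max_le
  · nlinarith
  · nlinarith

lemma cover_conv (A B L x y t : ℝ) (ht0 : 0 ≤ t) (ht1 : t ≤ 1) (hxy : x ≤ y)
    (hA : A ≤ x ∨ y ≤ A) (hB : B ≤ x + L ∨ y + L ≤ B) :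
    max 0 (min B ((t*x+(1-t)*y) + L) - max A (t*x+(1-t)*y)) ≤
      t * max 0 (min B (x+L) - max A x) + (1-t) * max 0 (min B (y+L) - max A y) := by
  set c := t*x+(1-t)*y with hc
  have hxc : x ≤ c := by nlinarith
  have hcy : c ≤ y := by nlinarith
  rcases hA with hA | hA <;> rcases hB with hB | hB
  · rw [max_eq_right hA, max_eq_right (hA.trans hxc), max_eq_right (hA.trans (hxc.trans hcy)),
        min_eq_left hB, min_eq_left (hB.trans (by linarith)), min_eq_left (hB.trans (by linarith))]
    have heq : B - c = t*(B-x)+(1-t)*(B-y) := by rw [hc]; ring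
    rw [heq]; exact max0_conv _ _ t ht0 ht1
  · rw [max_eq_right hA, max_eq_right (hA.trans hxc), max_eq_right (hA.trans (hxc.trans hcy)),
        min_eq_right (by linarith : y + L ≤ B), min_eq_right (by linarith : c + L ≤ B),
        min_eq_right (by linarith : x + L ≤ B)]
    have heq : c + L - c = t*(x+L-x)+(1-t)*(y+L-y) := by rw [hc]; ring
    rw [heq]; exact max0_conv _ _ t ht0 ht1
  · rw [max_eq_left hA, max_eq_left (hcy.trans hA), max_eq_left (hxc.trans (hcy.trans hA)),
        min_eq_left hB, min_eq_left (hB.trans (by linarith)), min_eq_left (hB.trans (by linarith))]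
    nlinarith [le_max_left (0:ℝ) (B-A), le_max_right (0:ℝ) (B-A)]
  · rw [max_eq_left hA, max_eq_left (hcy.trans hA), max_eq_left (hxc.trans (hcy.trans hA)),
        min_eq_right (by linarith : y + L ≤ B), min_eq_right (by linarith : c + L ≤ B),
        min_eq_right (by linarith : x + L ≤ B)]
    have heq : c + L - A = t*(x+L-A)+(1-t)*(y+L-A) := by rw [hc]; ring
    rw [heq]; exact max0_conv _ _ t ht0 ht1

lemma cover_mono_left (A B L c d : ℝ) (hcd : c ≤ d) (hA : d ≤ A) :
    max 0 (min B (c+L) - max A c) ≤ max 0 (min B (d+L) - max A d) := by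
  rw [max_eq_left (hcd.trans hA), max_eq_left hA]
  exact max_le_max le_rfl (sub_le_sub_right (min_le_min le_rfl (by linarith)) A)

lemma cover_mono_right (A B L x y : ℝ) (hxy : x ≤ y) (hB : B ≤ x + L) :
    max 0 (min B (y+L) - max A y) ≤ max 0 (min B (x+L) - max A x) := by
  rw [min_eq_left hB, min_eq_left (hB.trans (by linarith))]
  exact max_le_max le_rfl (sub_le_sub_left (max_le_max le_rfl hxy) B)

/-- In the Interval Covering Problem with intervals `[a i, b i]` and a covering
interval of length `L > 0`, some social-cost-minimizing covering interval starts
at a left endpoint `a i` or ends at a right endpoint `b i` (i.e. starts at `b i - L`).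
The social cost of position `c` is
`∑ i, ((b i - a i) - max 0 (min (b i) (c + L) - max (a i) c))`. -/
theorem interval_covering_optimum_at_endpoint (n : ℕ) (hn : 1 ≤ n)
    (a b : Fin n → ℝ) (hab : ∀ i, a i ≤ b i) (L : ℝ) (hL : 0 < L) :
    ∃ c' : ℝ, (∃ i : Fin n, c' = a i ∨ c' = b i - L) ∧
      ∀ c : ℝ,
        (∑ i, ((b i - a i) - max 0 (min (b i) (c' + L) - max (a i) c'))) ≤
        (∑ i, ((b i - a i) - max 0 (min (b i) (c + L) - max (a i) c))) := by
  classical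
  set S : Finset ℝ := (Finset.univ.image a) ∪ (Finset.univ.image (fun i => b i - L)) with hS
  have hSmem : ∀ s, s ∈ S ↔ ∃ i, s = a i ∨ s = b i - L := by
    intro s
    simp only [hS, Finset.mem_union, Finset.mem_image, Finset.mem_univ, true_and]
    constructor
    · rintro (⟨i, hi⟩ | ⟨i, hi⟩)
      · exact ⟨i, Or.inl hi.symm⟩
      · exact ⟨i, Or.inr hi.symm⟩
    · rintro ⟨i, hi | hi⟩
      · exact Or.inl ⟨i, hi.symm⟩
      · exact Or.inr ⟨i, hi.symm⟩
  have i0 : Fin n := ⟨0, hn⟩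
  have hSne : S.Nonempty := ⟨a i0, (hSmem _).2 ⟨i0, Or.inl rfl⟩⟩
  set f : ℝ → ℝ := fun c => ∑ i, max 0 (min (b i) (c+L) - max (a i) c) with hf
  obtain ⟨c', hc'S, hc'max⟩ := S.exists_max_image f hSne
  refine ⟨c', (hSmem c').1 hc'S, ?_⟩
  have key : ∀ c, f c ≤ f c' := by
    intro c
    by_cases hcS : c ∈ S
    · exact hc'max c hcS
    by_cases hlo : ∃ s ∈ S, s ≤ c
    · by_cases hhi : ∃ s ∈ S, c ≤ s
      · -- c is strictly between two candidates
        obtain ⟨s₀, hs₀S, hs₀⟩ := hlo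
        set Slo := S.filter (· ≤ c) with hSlo
        set Shi := S.filter (c ≤ ·) with hShi
        have hSlone : Slo.Nonempty := ⟨s₀, Finset.mem_filter.2 ⟨hs₀S, hs₀⟩⟩
        obtain ⟨s₁, hs₁S, hs₁⟩ := hhi
        have hShine : Shi.Nonempty := ⟨s₁, Finset.mem_filter.2 ⟨hs₁S, hs₁⟩⟩
        set x := Slo.max' hSlone with hx
        set y := Shi.min' hShine with hy
        have hxS : x ∈ S := (Finset.mem_filter.1 (Slo.max'_mem hSlone)).1
        have hyS : y ∈ S := (Finset.mem_filter.1 (Shi.min'_mem hShine)).1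
        have hxc : x ≤ c := (Finset.mem_filter.1 (Slo.max'_mem hSlone)).2
        have hcy : c ≤ y := (Finset.mem_filter.1 (Shi.min'_mem hShine)).2
        have hxc' : x < c := lt_of_le_of_ne hxc (fun h => hcS (h ▸ hxS))
        have hcy' : c < y := lt_of_le_of_ne hcy (fun h => hcS (h ▸ hyS))
        have hxy : x < y := hxc'.trans hcy'
        have hsep : ∀ s ∈ S, s ≤ x ∨ y ≤ s := by
          intro s hs
          rcases le_total s c with h | h
          · exact Or.inl (Slo.le_max' s (Finset.mem_filter.2 ⟨hs, h⟩))
          · exact Or.inr (Shi.min'_le s (Finset.mem_filter.2 ⟨hs, h⟩))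
        set t := (y - c) / (y - x) with ht
        have hyx : 0 < y - x := by linarith
        have ht0 : 0 ≤ t := div_nonneg (by linarith) (le_of_lt hyx)
        have ht1 : t ≤ 1 := by rw [ht, div_le_one hyx]; linarith
        have hcomb : c = t*x + (1-t)*y := by
          rw [ht]; field_simp; ring
        have hsum : f c ≤ t * f x + (1-t) * f y := by
          rw [hf]
          simp only
          rw [Finset.mul_sum, Finset.mul_sum, ← Finset.sum_add_distrib]
          apply Finset.sum_le_sum
          intro i _
          have hAi : a i ≤ x ∨ y ≤ a i := hsep (a i) ((hSmem _).2 ⟨i, Or.inl rfl⟩)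
          have hBi : b i ≤ x + L ∨ y + L ≤ b i := by
            rcases hsep (b i - L) ((hSmem _).2 ⟨i, Or.inr rfl⟩) with h | h
            · exact Or.inl (by linarith)
            · exact Or.inr (by linarith)
          rw [hcomb]
          exact cover_conv (a i) (b i) L x y t ht0 ht1 (le_of_lt hxy) hAi hBi
        have hfx : f x ≤ f c' := hc'max x hxS
        have hfy : f y ≤ f c' := hc'max y hyS
        nlinarith
      · -- c is above all candidates
        push_neg at hhi
        set d := S.max' hSne with hd
        have hdS : d ∈ S := S.max'_mem hSne
        have hdc : d ≤ c := le_of_lt (hhi d hdS)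
        have hfc : f c ≤ f d := by
          apply Finset.sum_le_sum
          intro i _
          have : b i - L ≤ d := S.le_max' _ ((hSmem _).2 ⟨i, Or.inr rfl⟩)
          exact cover_mono_right (a i) (b i) L d c hdc (by linarith)
        exact hfc.trans (hc'max d hdS)
    · -- c is below all candidates
      push_neg at hlo
      set d := S.min' hSne with hd
      have hdS : d ∈ S := S.min'_mem hSne
      have hcd : c ≤ d := le_of_lt (hlo d hdS)
      have hfc : f c ≤ f d := by
        apply Finset.sum_le_sum
        intro i _
        have : d ≤ a i := S.min'_le _ ((hSmem _).2 ⟨i, Or.inl rfl⟩)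
        exact cover_mono_left (a i) (b i) L c d hcd this
      exact hfc.trans (hc'max d hdS)
  intro c
  have hrw : ∀ d : ℝ, (∑ i, ((b i - a i) - max 0 (min (b i) (d + L) - max (a i) d)))
      = (∑ i, (b i - a i)) - f d := by
    intro d
    rw [hf, Finset.sum_sub_distrib]
  rw [hrw, hrw]
  have := key c
  linarith
end

section
/- For every n ≥ 1 and every profile s ∈ ℝ^n in the unit-length model, there exists an agent j such that placing the covering interval at s_j is optimal: Σ_{i=1}^n min(1, |s_j − s_i|) ≤ Σ_{i=1}^n min(1, |c − s_i|) for every c ∈ ℝ. -/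
/-- Concavity-type inequality for a single term `min 1 |· - s|` on an interval
`[x, y]` not containing `s` in its interior. -/
lemma term_concave (x y c s : ℝ) (hxc : x ≤ c) (hcy : c ≤ y) (hxy : x < y)
    (hs : s ≤ x ∨ y ≤ s) :
    ((y - c)/(y - x)) * min 1 |x - s| + ((c - x)/(y - x)) * min 1 |y - s|
      ≤ min 1 |c - s| := by
  have hd : (0:ℝ) < y - x := by linarith
  set p := (y - c)/(y - x) with hp_def
  set q := (c - x)/(y - x) with hq_def
  have hp : 0 ≤ p := div_nonneg (by linarith) hd.le
  have hq : 0 ≤ q := div_nonneg (by linarith) hd.le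
  have hpq : p + q = 1 := by
    rw [hp_def, hq_def, ← add_div, div_eq_one_iff_eq hd.ne']
    ring
  have h1x : min 1 |x - s| ≤ 1 := min_le_left _ _
  have h1y : min 1 |y - s| ≤ 1 := min_le_left _ _
  have h2x : min 1 |x - s| ≤ |x - s| := min_le_right _ _
  have h2y : min 1 |y - s| ≤ |y - s| := min_le_right _ _
  have habs : p * |x - s| + q * |y - s| = |c - s| := by
    rcases hs with h | h
    · rw [abs_of_nonneg (by linarith : (0:ℝ) ≤ x - s),
        abs_of_nonneg (by linarith : (0:ℝ) ≤ y - s),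
        abs_of_nonneg (by linarith : (0:ℝ) ≤ c - s)]
      rw [hp_def, hq_def]
      field_simp
      ring
    · rw [abs_of_nonpos (by linarith : x - s ≤ (0:ℝ)),
        abs_of_nonpos (by linarith : y - s ≤ (0:ℝ)),
        abs_of_nonpos (by linarith : c - s ≤ (0:ℝ))]
      rw [hp_def, hq_def]
      field_simp
      ring
  apply le_min
  · nlinarith
  · nlinarith

/-- In the unit-length Truthful Interval Covering model, for every profile `s`
there is an agent `j` such that placing the covering interval at `s j` minimizes
the social cost `∑ i, min 1 |c - s i|` over all positions `c`. -/
theorem optimal_covering_at_some_agent (n : ℕ) (hn : 1 ≤ n) (s : Fin n → ℝ) :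
    ∃ j : Fin n, ∀ c : ℝ,
      (∑ i, min 1 |s j - s i|) ≤ ∑ i, min 1 |c - s i| := by
  haveI : NeZero n := ⟨by omega⟩
  have hne : (Finset.univ : Finset (Fin n)).Nonempty := Finset.univ_nonempty
  obtain ⟨j, -, hj⟩ := Finset.exists_min_image Finset.univ
    (fun k => ∑ i, min 1 |s k - s i|) hne
  refine ⟨j, fun c => ?_⟩
  by_cases hL : ∃ a, s a ≤ c
  · by_cases hR : ∃ b, c ≤ s b
    · obtain ⟨a0, ha0⟩ := hL
      obtain ⟨b0, hb0⟩ := hR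
      obtain ⟨a, haf, ha⟩ := Finset.exists_max_image
        (Finset.univ.filter fun i => s i ≤ c) s ⟨a0, by simp [ha0]⟩
      obtain ⟨b, hbf, hb⟩ := Finset.exists_min_image
        (Finset.univ.filter fun i => c ≤ s i) s ⟨b0, by simp [hb0]⟩
      have hac : s a ≤ c := (Finset.mem_filter.mp haf).2
      have hcb : c ≤ s b := (Finset.mem_filter.mp hbf).2
      rcases eq_or_lt_of_le (hac.trans hcb) with hab | hab
      · -- s a = s b, hence c = s a
        have hca : c = s a := le_antisymm (hab ▸ hcb) hac
        rw [hca]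
        exact hj a (Finset.mem_univ a)
      · set p := (s b - c)/(s b - s a) with hp_def
        set q := (c - s a)/(s b - s a) with hq_def
        have hd : (0:ℝ) < s b - s a := by linarith
        have hp : 0 ≤ p := div_nonneg (by linarith) hd.le
        have hq : 0 ≤ q := div_nonneg (by linarith) hd.le
        have hpq : p + q = 1 := by
          rw [hp_def, hq_def, ← add_div, div_eq_one_iff_eq hd.ne']
          ring
        have hterm : ∀ i ∈ Finset.univ,
            p * min 1 |s a - s i| + q * min 1 |s b - s i| ≤ min 1 |c - s i| := by
          intro i _
          apply term_concave (s a) (s b) c (s i) hac hcb hab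
          by_cases h : s i ≤ c
          · exact Or.inl (ha i (Finset.mem_filter.mpr ⟨Finset.mem_univ i, h⟩))
          · exact Or.inr (hb i (Finset.mem_filter.mpr ⟨Finset.mem_univ i,
              (not_le.mp h).le⟩))
        have hsum : ∑ i, (p * min 1 |s a - s i| + q * min 1 |s b - s i|)
            ≤ ∑ i, min 1 |c - s i| := Finset.sum_le_sum hterm
        rw [Finset.sum_add_distrib, ← Finset.mul_sum, ← Finset.mul_sum] at hsum
        have hja := hj a (Finset.mem_univ a)
        have hjb := hj b (Finset.mem_univ b)
        have h1 := mul_le_mul_of_nonneg_left hja hp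
        have h2 := mul_le_mul_of_nonneg_left hjb hq
        have h3 : p * (∑ i, min 1 |s j - s i|) + q * (∑ i, min 1 |s j - s i|)
            = ∑ i, min 1 |s j - s i| := by rw [← add_mul, hpq, one_mul]
        linarith
    · -- all agents strictly left of c
      push_neg at hR
      obtain ⟨a, -, ha⟩ := Finset.exists_max_image Finset.univ s hne
      have : (∑ i, min 1 |s a - s i|) ≤ ∑ i, min 1 |c - s i| := by
        apply Finset.sum_le_sum
        intro i _
        apply min_le_min le_rfl
        have h1 : s i ≤ s a := ha i (Finset.mem_univ i)
        have h2 : s a < c := hR a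
        rw [abs_of_nonneg (by linarith : (0:ℝ) ≤ s a - s i),
          abs_of_nonneg (by linarith : (0:ℝ) ≤ c - s i)]
        linarith
      exact le_trans (hj a (Finset.mem_univ a)) this
  · -- all agents strictly right of c
    push_neg at hL
    obtain ⟨b, -, hb⟩ := Finset.exists_min_image Finset.univ s hne
    have : (∑ i, min 1 |s b - s i|) ≤ ∑ i, min 1 |c - s i| := by
      apply Finset.sum_le_sum
      intro i _
      apply min_le_min le_rfl
      have h1 : s b ≤ s i := hb i (Finset.mem_univ i)
      have h2 : c < s b := hL b
      rw [abs_of_nonpos (by linarith : s b - s i ≤ (0:ℝ)),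
        abs_of_nonpos (by linarith : c - s i ≤ (0:ℝ))]
      linarith
    exact le_trans (hj b (Finset.mem_univ b)) this
end

section
/- Let n ≥ 2 be even and let s ∈ ℝ^n be a profile in the unit-length model. Let m = o_{n/2}(s) be the (n/2)-th smallest entry of s (the position of the median agent). Then for every c ∈ ℝ, Σ_{i=1}^n min(1, |m − s_i|) ≤ (2 − 2/n) · Σ_{i=1}^n min(1, |c − s_i|); that is, the Median mechanism achieves approximation ratio 2 − 2/n for the social cost. -/
open Finset in
lemma min_one_add (q r : ℝ) (hq : 0 ≤ q) (hr : 0 ≤ r) :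
    min 1 (q + r) ≤ min 1 q + min 1 r := by
  rcases le_total 1 q with h | h
  · have h1 : min 1 q = 1 := min_eq_left h
    have h2 : min 1 (q + r) ≤ 1 := min_le_left _ _
    have h3 : (0:ℝ) ≤ min 1 r := le_min zero_le_one hr
    linarith
  · rcases le_total 1 r with h' | h'
    · have h1 : min 1 r = 1 := min_eq_left h'
      have h2 : min 1 (q + r) ≤ 1 := min_le_left _ _
      have h3 : (0:ℝ) ≤ min 1 q := le_min zero_le_one hq
      linarith
    · have h1 : min 1 q = q := min_eq_right h
      have h2 : min 1 r = r := min_eq_right h'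
      have h3 : min 1 (q + r) ≤ q + r := min_le_right _ _
      linarith

lemma min1_tri (x y z : ℝ) : min 1 |x - z| ≤ min 1 |y - z| + min 1 |x - y| := by
  have habs : |x - z| ≤ |y - z| + |x - y| := by
    have h := abs_sub_le x y z
    have : |y - z| = |z - y| := abs_sub_comm _ _
    linarith [abs_sub_le x y z]
  calc min 1 |x - z| ≤ min 1 (|y - z| + |x - y|) := min_le_min le_rfl habs
    _ ≤ _ := min_one_add _ _ (abs_nonneg _) (abs_nonneg _)

lemma sum_if_ge (n k : ℕ) (hk : k ≤ n) (d : ℝ) :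
    (∑ i : Fin n, if k ≤ (i : ℕ) then d else 0) = ((n - k : ℕ) : ℝ) * d := by
  rw [Fin.sum_univ_eq_sum_range (fun i => if k ≤ i then d else 0) n]
  rw [Finset.range_eq_Ico, ← Finset.sum_Ico_consecutive _ (Nat.zero_le k) hk]
  rw [Finset.sum_eq_zero (fun i hi => by
    rw [if_neg]; exact not_le.mpr (Finset.mem_Ico.mp hi).2)]
  rw [Finset.sum_congr rfl (fun i hi => if_pos (Finset.mem_Ico.mp hi).1)]
  rw [Finset.sum_const, Nat.card_Ico]
  ring

lemma sum_if_lt (n k : ℕ) (hk : k ≤ n) (d : ℝ) :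
    (∑ i : Fin n, if (i : ℕ) < k then d else 0) = (k : ℝ) * d := by
  rw [Fin.sum_univ_eq_sum_range (fun i => if i < k then d else 0) n]
  rw [Finset.range_eq_Ico, ← Finset.sum_Ico_consecutive _ (Nat.zero_le k) hk]
  have h1 : (∑ i ∈ Finset.Ico 0 k, if i < k then d else 0) = (k:ℝ) * d := by
    rw [Finset.sum_congr rfl (fun i hi => if_pos (Finset.mem_Ico.mp hi).2),
      Finset.sum_const, Nat.card_Ico, Nat.sub_zero, nsmul_eq_mul]
  have h2 : (∑ i ∈ Finset.Ico k n, if i < k then d else 0) = 0 :=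
    Finset.sum_eq_zero (fun i hi => by
      rw [if_neg]; exact not_lt.mpr (Finset.mem_Ico.mp hi).1)
  rw [h1, h2, add_zero]

lemma key {n : ℕ} (hn : 2 ≤ n) (hev : Even n) (t : Fin n → ℝ) (mono : Monotone t) (c : ℝ) :
    (∑ i, min 1 |t ⟨n / 2 - 1, by have := hn; omega⟩ - t i|) ≤
      (2 - 2 / (n : ℝ)) * ∑ i, min 1 |c - t i| := by
  obtain ⟨h, hhn⟩ := hev
  have hh1 : 1 ≤ h := by omega
  set med : Fin n := ⟨n / 2 - 1, by omega⟩ with hmedd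
  have hmedval : (med : ℕ) = h - 1 := by simp only [hmedd]; omega
  set m := t med with hm
  set d := min 1 |c - m| with hd
  set B := ∑ i, min 1 |c - t i| with hB
  have hterm : ∀ i : Fin n, (0:ℝ) ≤ min 1 |c - t i| := fun i => le_min zero_le_one (abs_nonneg _)
  have hB0 : 0 ≤ B := Finset.sum_nonneg fun i _ => hterm i
  have hd0 : 0 ≤ d := le_min zero_le_one (abs_nonneg _)
  have hmedsum : (∑ i : Fin n, if i = med then d else 0) = d := by
    rw [Finset.sum_ite_eq' Finset.univ med (fun _ => d)]
    simp
  have step1 : (∑ i, min 1 |m - t i|) ≤ B + (h : ℝ) * d - d := by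
    rcases le_total m c with hc | hc
    · have pb : ∀ i : Fin n, min 1 |m - t i| ≤
          min 1 |c - t i| + (if h ≤ (i:ℕ) then d else 0) - (if i = med then d else 0) := by
        intro i
        by_cases hi : i = med
        · subst hi
          rw [if_pos rfl, if_neg (by omega : ¬ h ≤ (med:ℕ)), ← hm, sub_self,
            abs_zero, min_eq_right zero_le_one]
          linarith [hd.le, hd.ge]
        · by_cases hge : h ≤ (i:ℕ)
          · have htri := min1_tri m c (t i)
            rw [abs_sub_comm m c] at htri
            rw [if_pos hge, if_neg hi]
            linarith
          · have hle : t i ≤ m := mono (by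
              rw [Fin.le_def, hmedval]; omega)
            have habs : |m - t i| ≤ |c - t i| := by
              rw [abs_of_nonneg (by linarith), abs_of_nonneg (by linarith)]
              linarith
            rw [if_neg hge, if_neg hi]
            have := min_le_min (le_refl (1:ℝ)) habs
            linarith
      calc (∑ i, min 1 |m - t i|)
          ≤ ∑ i : Fin n, (min 1 |c - t i| + (if h ≤ (i:ℕ) then d else 0)
              - (if i = med then d else 0)) := Finset.sum_le_sum fun i _ => pb i
        _ = B + (h : ℝ) * d - d := by
            rw [Finset.sum_sub_distrib, Finset.sum_add_distrib,
              sum_if_ge n h (by omega) d, hmedsum,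
              show n - h = h from by omega]
    · have pb : ∀ i : Fin n, min 1 |m - t i| ≤
          min 1 |c - t i| + (if (i:ℕ) < h then d else 0) - (if i = med then d else 0) := by
        intro i
        by_cases hi : i = med
        · subst hi
          rw [if_pos rfl, if_pos (by omega : (med:ℕ) < h), ← hm, sub_self,
            abs_zero, min_eq_right zero_le_one]
          linarith [le_min zero_le_one (abs_nonneg (c - m))]
        · by_cases hlt : (i:ℕ) < h
          · have htri := min1_tri m c (t i)
            rw [abs_sub_comm m c] at htri
            rw [if_pos hlt, if_neg hi]
            linarith
          · have hge : m ≤ t i := mono (by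
              rw [Fin.le_def, hmedval]; omega)
            have habs : |m - t i| ≤ |c - t i| := by
              rw [abs_sub_comm m (t i), abs_sub_comm c (t i),
                abs_of_nonneg (by linarith), abs_of_nonneg (by linarith)]
              linarith
            rw [if_neg hlt, if_neg hi]
            have := min_le_min (le_refl (1:ℝ)) habs
            linarith
      calc (∑ i, min 1 |m - t i|)
          ≤ ∑ i : Fin n, (min 1 |c - t i| + (if (i:ℕ) < h then d else 0)
              - (if i = med then d else 0)) := Finset.sum_le_sum fun i _ => pb i
        _ = B + (h : ℝ) * d - d := by
            rw [Finset.sum_sub_distrib, Finset.sum_add_distrib,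
              sum_if_lt n h (by omega) d, hmedsum]
  have step2 : (h : ℝ) * d ≤ B := by
    rcases le_total m c with hc | hc
    · have pb : ∀ i : Fin n, (if (i:ℕ) < h then d else 0) ≤ min 1 |c - t i| := by
        intro i
        by_cases hlt : (i:ℕ) < h
        · have hle : t i ≤ m := mono (by rw [Fin.le_def, hmedval]; omega)
          have habs : |c - m| ≤ |c - t i| := by
            rw [abs_of_nonneg (by linarith), abs_of_nonneg (by linarith)]
            linarith
          rw [if_pos hlt, hd]
          exact min_le_min (le_refl (1:ℝ)) habs
        · rw [if_neg hlt]; exact hterm i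
      calc (h : ℝ) * d = ∑ i : Fin n, (if (i:ℕ) < h then d else 0) :=
            (sum_if_lt n h (by omega) d).symm
        _ ≤ B := Finset.sum_le_sum fun i _ => pb i
    · have pb : ∀ i : Fin n, (if h ≤ (i:ℕ) then d else 0) ≤ min 1 |c - t i| := by
        intro i
        by_cases hge : h ≤ (i:ℕ)
        · have hle : m ≤ t i := mono (by rw [Fin.le_def, hmedval]; omega)
          have habs : |c - m| ≤ |c - t i| := by
            rw [abs_sub_comm c m, abs_sub_comm c (t i),
              abs_of_nonneg (by linarith), abs_of_nonneg (by linarith)]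
            linarith
          rw [if_pos hge, hd]
          exact min_le_min (le_refl (1:ℝ)) habs
        · rw [if_neg hge]; exact hterm i
      calc (h : ℝ) * d = ((n - h : ℕ) : ℝ) * d := by
            rw [show n - h = h from by omega]
        _ = ∑ i : Fin n, (if h ≤ (i:ℕ) then d else 0) := (sum_if_ge n h (by omega) d).symm
        _ ≤ B := Finset.sum_le_sum fun i _ => pb i
  have hnr : (n:ℝ) = 2 * (h:ℝ) := by rw [hhn]; push_cast; ring
  have hhr : (1:ℝ) ≤ (h:ℝ) := by exact_mod_cast hh1
  have hhpos : (0:ℝ) < (h:ℝ) := by linarith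
  rw [show (2 - 2/(n:ℝ)) = (2*(h:ℝ) - 1)/(h:ℝ) from by rw [hnr]; field_simp]
  rw [div_mul_eq_mul_div, le_div_iff₀ hhpos]
  nlinarith [mul_le_mul_of_nonneg_left step2 (show (0:ℝ) ≤ (h:ℝ) - 1 by linarith),
    mul_le_mul_of_nonneg_right step1 (le_of_lt hhpos)]


/-- The Median mechanism, which places the covering interval at the position of
the median agent (the `(n/2)`-th smallest report, i.e. index `n/2 - 1` zero-indexed),
achieves an approximation ratio of `2 - 2/n` for the social cost in the
unit-length Truthful Interval Covering model. -/
theorem median_mechanism_approx (n : ℕ) (hn : 2 ≤ n) (hev : Even n)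
    (s : Fin n → ℝ) (c : ℝ) :
    (∑ i, min 1 |oStat s ⟨n / 2 - 1, by omega⟩ - s i|) ≤
      (2 - 2 / (n : ℝ)) * ∑ i, min 1 |c - s i| := by
  have key' := key hn hev (s ∘ Tuple.sort s) (Tuple.monotone_sort s) c
  have e1 := Equiv.sum_comp (Tuple.sort s)
    (fun j => min 1 |oStat s ⟨n / 2 - 1, by omega⟩ - s j|)
  have e2 := Equiv.sum_comp (Tuple.sort s) (fun j => min 1 |c - s j|)
  rw [← e1, ← e2]
  exact key'
end

section
/- Let n ≥ 2 be even and let p_1, …, p_n ≥ 0 with Σ_k p_k = 1 define a randomized mechanism that outputs the k-th smallest report o_k(s) with probability p_k. Then there exist a profile s ∈ ℝ^n and a position c ∈ ℝ such that SC_s(c) > 0 and Σ_{k=1}^n p_k · SC_s(o_k(s)) ≥ (3/2 − 1/n) · SC_s(c); in particular, the approximation ratio of any convex combination of k-th ordered statistic mechanisms is at least 3/2 − 1/n (hence at least 3/2 asymptotically). -/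
open Finset

/-- If the reports are natural numbers, the truncated distance is 0 or 1. -/
lemma min_one_abs_natCast (a b : ℕ) :
    min 1 |((a : ℝ)) - (b : ℝ)| = if b = a then 0 else 1 := by
  rcases eq_or_ne b a with h | h
  · simp [h]
  · rw [if_neg h]
    have h1 : (1 : ℤ) ≤ |(a : ℤ) - (b : ℤ)| := by
      have hne : (a : ℤ) - (b : ℤ) ≠ 0 := by
        intro hc; apply h; omega
      exact Int.one_le_abs hne
    have h2 : (1 : ℝ) ≤ |(a : ℝ) - (b : ℝ)| := by
      rw [show ((a:ℝ) - b) = (((a:ℤ) - (b:ℤ) : ℤ) : ℝ) by push_cast; ring,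
        ← Int.cast_abs]
      exact_mod_cast h1
    exact min_eq_left h2

lemma sc_eval (n : ℕ) (t : ℕ → ℕ) (a : ℕ) :
    (∑ i : Fin n, min 1 |((a : ℝ)) - ((t i : ℕ) : ℝ)|) =
      ∑ i ∈ range n, (if t i = a then (0:ℝ) else 1) := by
  rw [Fin.sum_univ_eq_sum_range (fun i => min 1 |((a : ℝ)) - ((t i : ℕ) : ℝ)|) n]
  exact Finset.sum_congr rfl fun i _ => min_one_abs_natCast a (t i)

lemma count_eval (P : ℕ → Prop) [DecidablePred P] (n : ℕ) :
    (∑ i ∈ range n, (if P i then (0:ℝ) else 1)) =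
      ((range n).filter (fun i => ¬ P i)).card := by
  rw [← Finset.sum_boole]
  exact Finset.sum_congr rfl fun i _ => by by_cases h : P i <;> simp [h]

lemma oStat_of_monotone {n : ℕ} {s : Fin n → ℝ} (hs : Monotone s) (k : Fin n) :
    oStat s k = s k := by
  unfold oStat
  rw [Tuple.sort_eq_refl_iff_monotone.mpr hs]
  rfl

/-- Lower bound for randomized ordered-statistic mechanisms: for every convex
combination of `k`-th ordered statistic mechanisms (given by probabilities `p`)
there are a profile `s` and a position `c` with positive social cost such that
the expected social cost of the mechanism is at least `(3/2 - 1/n)` times the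
social cost of `c`. -/
theorem randomized_ordered_statistic_lower_bound (n : ℕ) (hn : 2 ≤ n) (hev : Even n)
    (p : Fin n → ℝ) (hp : ∀ k, 0 ≤ p k) (hsum : ∑ k, p k = 1) :
    ∃ (s : Fin n → ℝ) (c : ℝ),
      0 < (∑ i, min 1 |c - s i|) ∧
      (3 / 2 - 1 / (n : ℝ)) * (∑ i, min 1 |c - s i|) ≤
        ∑ k, p k * ∑ i, min 1 |oStat s k - s i| := by
  obtain ⟨m, hm⟩ := hev
  have hm1 : 1 ≤ m := by omega
  have hmR : (1 : ℝ) ≤ (m : ℝ) := by exact_mod_cast hm1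
  have hnR : (n : ℝ) = 2 * m := by rw [hm]; push_cast; ring
  -- key coefficient computation
  have hkey : (3 / 2 - 1 / (n : ℝ)) * (m : ℝ) = 3 / 2 * m - 1 / 2 := by
    rw [hnR]
    have hm0 : (m : ℝ) ≠ 0 := by positivity
    field_simp
  -- split the probability mass
  set P : Fin n → Prop := fun k => (k : ℕ) < m with hP
  have hdec : DecidablePred P := fun k => Nat.decLt _ _
  set q1 : ℝ := ∑ k ∈ univ.filter (fun k : Fin n => (k : ℕ) < m), p k with hq1
  set q2 : ℝ := ∑ k ∈ univ.filter (fun k : Fin n => ¬ (k : ℕ) < m), p k with hq2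
  have hq12 : q1 + q2 = 1 := by
    rw [hq1, hq2, Finset.sum_filter_add_sum_filter_not, hsum]
  have hq1pos : 0 ≤ q1 := Finset.sum_nonneg fun k _ => hp k
  have hq2pos : 0 ≤ q2 := Finset.sum_nonneg fun k _ => hp k
  -- generic final step, given the per-statistic costs A (low half) and B (high half)
  have main : ∀ (t : ℕ → ℕ), Monotone (fun i : Fin n => ((t i : ℕ) : ℝ)) →
      ∀ (c : ℕ) (A B : ℝ),
      (∑ i ∈ range n, (if t i = c then (0:ℝ) else 1)) = (m : ℝ) →
      (∀ k : Fin n, (k : ℕ) < m →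
        (∑ i ∈ range n, (if t i = t k then (0:ℝ) else 1)) = A) →
      (∀ k : Fin n, ¬ (k : ℕ) < m →
        (∑ i ∈ range n, (if t i = t k then (0:ℝ) else 1)) = B) →
      (3 / 2 * (m:ℝ) - 1 / 2 ≤ q1 * A + q2 * B) →
      ∃ (s : Fin n → ℝ) (c' : ℝ),
        0 < (∑ i, min 1 |c' - s i|) ∧
        (3 / 2 - 1 / (n : ℝ)) * (∑ i, min 1 |c' - s i|) ≤
          ∑ k, p k * ∑ i, min 1 |oStat s k - s i| := by
    intro t hmono c A B hc hA hB hfin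
    refine ⟨fun i => ((t i : ℕ) : ℝ), (c : ℝ), ?_, ?_⟩
    · rw [sc_eval n t c, hc]; linarith
    · have hsc : (∑ i : Fin n, min 1 |(c:ℝ) - ((t i : ℕ) : ℝ)|) = (m : ℝ) := by
        rw [sc_eval n t c, hc]
      rw [hsc, hkey]
      have hterm : ∀ k : Fin n,
          p k * ∑ i : Fin n, min 1 |oStat (fun i => ((t i : ℕ) : ℝ)) k -
            ((t i : ℕ) : ℝ)| = p k * (if (k : ℕ) < m then A else B) := by
        intro k
        rw [oStat_of_monotone hmono k]
        rw [sc_eval n t (t (k:ℕ))]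
        by_cases hk : (k : ℕ) < m
        · rw [hA k hk, if_pos hk]
        · rw [hB k hk, if_neg hk]
      rw [Finset.sum_congr rfl fun k _ => hterm k]
      rw [← Finset.sum_filter_add_sum_filter_not univ (fun k : Fin n => (k : ℕ) < m)]
      have e1 : (∑ k ∈ univ.filter (fun k : Fin n => (k : ℕ) < m),
          p k * (if (k : ℕ) < m then A else B)) = q1 * A := by
        rw [hq1, Finset.sum_mul]
        refine Finset.sum_congr rfl fun k hk => ?_
        rw [if_pos (Finset.mem_filter.mp hk).2]
      have e2 : (∑ k ∈ univ.filter (fun k : Fin n => ¬ (k : ℕ) < m),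
          p k * (if (k : ℕ) < m then A else B)) = q2 * B := by
        rw [hq2, Finset.sum_mul]
        refine Finset.sum_congr rfl fun k hk => ?_
        rw [if_neg (Finset.mem_filter.mp hk).2]
      rw [e1, e2]
      exact hfin
  rcases le_total (1/2 : ℝ) q1 with hq | hq
  · -- mass on low statistics: spread agents at 0,…,m-1 and a cluster of m agents at m
    apply main (fun i => min i m) ?_ m ((2 : ℝ) * m - 1) (m : ℝ) ?_ ?_ ?_ ?_
    · intro i j hij
      exact Nat.cast_le.mpr (min_le_min (Fin.le_def.mp hij) le_rfl)
    · -- cost at the cluster position m is m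
      have : (∑ i ∈ range n, (if min i m = m then (0:ℝ) else 1)) =
          ∑ i ∈ range n, (if (fun i => m ≤ i) i then (0:ℝ) else 1) :=
        Finset.sum_congr rfl fun i _ => if_congr (by omega) rfl rfl
      rw [this, count_eval (fun i => m ≤ i) n]
      have : (range n).filter (fun i => ¬ m ≤ i) = range m := by
        ext i; simp; omega
      rw [this, card_range]
    · -- low statistics cost 2m-1
      intro k hk
      have hkv : min (k : ℕ) m = (k : ℕ) := by omega
      beta_reduce
      rw [hkv]
      have : (∑ i ∈ range n, (if min i m = (k:ℕ) then (0:ℝ) else 1)) =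
          ∑ i ∈ range n, (if (fun i => i = (k:ℕ)) i then (0:ℝ) else 1) :=
        Finset.sum_congr rfl fun i _ => if_congr (by omega) rfl rfl
      rw [this, count_eval (fun i => i = (k:ℕ)) n]
      have : (range n).filter (fun i => ¬ i = (k:ℕ)) = (range n).erase (k:ℕ) := by
        ext i; simp [and_comm]
      rw [this, Finset.card_erase_of_mem (Finset.mem_range.mpr k.isLt), card_range]
      have h1 : n - 1 = m + (m - 1) := by omega
      rw [h1]
      push_cast [Nat.cast_sub hm1]
      ring
    · -- high statistics cost m
      intro k hk
      have hkv : min (k : ℕ) m = m := by omega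
      beta_reduce
      rw [hkv]
      have : (∑ i ∈ range n, (if min i m = m then (0:ℝ) else 1)) =
          ∑ i ∈ range n, (if (fun i => m ≤ i) i then (0:ℝ) else 1) :=
        Finset.sum_congr rfl fun i _ => if_congr (by omega) rfl rfl
      rw [this, count_eval (fun i => m ≤ i) n]
      have : (range n).filter (fun i => ¬ m ≤ i) = range m := by
        ext i; simp; omega
      rw [this, card_range]
    · nlinarith [mul_nonneg (by linarith : (0:ℝ) ≤ q1 - 1/2)
        (by linarith : (0:ℝ) ≤ (m:ℝ) - 1)]
  · -- mass on high statistics: cluster of m agents at 0 and spread agents at 1,…,m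
    apply main (fun i => i + 1 - m) ?_ 0 (m : ℝ) ((2 : ℝ) * m - 1) ?_ ?_ ?_ ?_
    · intro i j hij
      have hij' := Fin.le_def.mp hij
      exact Nat.cast_le.mpr (by omega : (i:ℕ) + 1 - m ≤ (j:ℕ) + 1 - m)
    · -- cost at the cluster position 0 is m
      have : (∑ i ∈ range n, (if i + 1 - m = 0 then (0:ℝ) else 1)) =
          ∑ i ∈ range n, (if (fun i => i < m) i then (0:ℝ) else 1) :=
        Finset.sum_congr rfl fun i _ => if_congr (by omega) rfl rfl
      rw [this, count_eval (fun i => i < m) n]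
      have : (range n).filter (fun i => ¬ i < m) = Finset.Ico m n := by
        ext i; simp [Finset.mem_Ico]; omega
      rw [this, Nat.card_Ico]
      have h1 : n - m = m := by omega
      rw [h1]
    · -- low statistics cost m
      intro k hk
      have hkv : (k : ℕ) + 1 - m = 0 := by omega
      beta_reduce
      rw [hkv]
      have : (∑ i ∈ range n, (if i + 1 - m = 0 then (0:ℝ) else 1)) =
          ∑ i ∈ range n, (if (fun i => i < m) i then (0:ℝ) else 1) :=
        Finset.sum_congr rfl fun i _ => if_congr (by omega) rfl rfl
      rw [this, count_eval (fun i => i < m) n]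
      have : (range n).filter (fun i => ¬ i < m) = Finset.Ico m n := by
        ext i; simp [Finset.mem_Ico]; omega
      rw [this, Nat.card_Ico]
      have h1 : n - m = m := by omega
      rw [h1]
    · -- high statistics cost 2m-1
      intro k hk
      have hkm : m ≤ (k : ℕ) := by omega
      beta_reduce
      have : (∑ i ∈ range n, (if i + 1 - m = (k:ℕ) + 1 - m then (0:ℝ) else 1)) =
          ∑ i ∈ range n, (if (fun i => i = (k:ℕ)) i then (0:ℝ) else 1) :=
        Finset.sum_congr rfl fun i _ => if_congr (by omega) rfl rfl
      rw [this, count_eval (fun i => i = (k:ℕ)) n]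
      have : (range n).filter (fun i => ¬ i = (k:ℕ)) = (range n).erase (k:ℕ) := by
        ext i; simp [and_comm]
      rw [this, Finset.card_erase_of_mem (Finset.mem_range.mpr k.isLt), card_range]
      have h1 : n - 1 = m + (m - 1) := by omega
      rw [h1]
      push_cast [Nat.cast_sub hm1]
      ring
    · nlinarith [mul_nonneg (by linarith : (0:ℝ) ≤ q2 - 1/2)
        (by linarith : (0:ℝ) ≤ (m:ℝ) - 1)]
end

section
/- In the variable-length model with n = 2 agents and a covering interval of length 1, let f be any truthful deterministic mechanism. Then for every ε ∈ (0, 1), there exist an instance I = ([a_1, b_1], [a_2, b_2]) and a position c ∈ ℝ such that SC_I(c) > 0 and SC_I(f(I)) ≥ (1/ε) · SC_I(c); that is, when the interval lengths are unknown (reported by the agents), every truthful deterministic mechanism has approximation ratio at least 1/ε for every ε ∈ (0, 1). -/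
/-- Cost of an agent with interval `[a, b]` when the unit-length covering interval
is placed at `c`: the uncovered length `(b - a) - |[a, b] ∩ [c, c+1]|`. -/
noncomputable def icost (a b c : ℝ) : ℝ :=
  (b - a) - max 0 (min b (c + 1) - max a c)

/-- Social cost of a two-agent instance `I` (each agent is a pair of endpoints). -/
noncomputable def SC2 (I : Fin 2 → ℝ × ℝ) (c : ℝ) : ℝ :=
  ∑ i, icost (I i).1 (I i).2 c

/-- A deterministic mechanism for the variable-length model with two agents is
truthful if no agent with a valid true interval can decrease her true cost by
reporting any valid interval instead. -/
def Truthful2 (f : (Fin 2 → ℝ × ℝ) → ℝ) : Prop :=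
  ∀ (I : Fin 2 → ℝ × ℝ), (∀ i, (I i).1 ≤ (I i).2) →
    ∀ (i : Fin 2) (J : ℝ × ℝ), J.1 ≤ J.2 →
      icost (I i).1 (I i).2 (f I) ≤ icost (I i).1 (I i).2 (f (Function.update I i J))

lemma icost_nonneg (a b c : ℝ) (h : a ≤ b) : 0 ≤ icost a b c := by
  unfold icost
  have h1 : max 0 (min b (c + 1) - max a c) ≤ b - a := by
    apply max_le (by linarith)
    have h2 := min_le_left b (c + 1)
    have h3 := le_max_left a c
    linarith
  linarith

lemma icost_miss (a b c : ℝ) (h : b ≤ c ∨ c + 1 ≤ a) : icost a b c = b - a := by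
  unfold icost
  have h0 : min b (c + 1) - max a c ≤ 0 := by
    rcases h with h | h
    · have h2 := min_le_left b (c + 1)
      have h3 := le_max_right a c
      linarith
    · have h2 := min_le_right b (c + 1)
      have h3 := le_max_left a c
      linarith
  rw [max_eq_left h0]
  ring

lemma icost_full (a b c : ℝ) (hab : a ≤ b) (h1 : c ≤ a) (h2 : b ≤ c + 1) :
    icost a b c = 0 := by
  unfold icost
  rw [min_eq_left h2, max_eq_left h1, max_eq_right (by linarith)]
  ring

lemma icost_ge (a b c u : ℝ) (hu : 0 ≤ u) (h : min b (c + 1) - max a c ≤ u) :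
    (b - a) - u ≤ icost a b c := by
  unfold icost
  have := max_le hu h
  linarith

lemma miss_of_cost_eq (a b c : ℝ) (hab : a < b) (h : b - a ≤ icost a b c) :
    b ≤ c ∨ c + 1 ≤ a := by
  unfold icost at h
  have h4 := le_max_right 0 (min b (c + 1) - max a c)
  by_contra hcon
  push_neg at hcon
  obtain ⟨h1, h2⟩ := hcon
  have hb : max a c < b := max_lt hab h1
  have hc1 : max a c < c + 1 := max_lt h2 (by linarith)
  have h5 := lt_min hb hc1
  linarith

set_option maxHeartbeats 1600000 in
/-- When interval lengths are unknown (reported by the agents), every deterministic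
truthful mechanism for two agents with a unit covering interval has approximation
ratio at least `1/ε` for every `ε ∈ (0, 1)`. -/
theorem unknown_lengths_deterministic_lower_bound
    (f : (Fin 2 → ℝ × ℝ) → ℝ) (hf : Truthful2 f)
    (ε : ℝ) (hε0 : 0 < ε) (hε1 : ε < 1) :
    ∃ I : Fin 2 → ℝ × ℝ, (∀ i, (I i).1 ≤ (I i).2) ∧
      ∃ c : ℝ, 0 < SC2 I c ∧ (1 / ε) * SC2 I c ≤ SC2 I (f I) := by
  set e : ℝ := min ε (1/4) with he
  have he0 : 0 < e := lt_min hε0 (by norm_num)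
  have he4 : e ≤ 1/4 := min_le_right _ _
  have heε : e ≤ ε := min_le_left _ _
  -- useful arithmetic fact
  have hfinal : ∀ S : ℝ, e^2 + e ≤ S → (1/ε) * e^2 ≤ S := by
    intro S hS
    have hinv : 0 < 1/ε := by positivity
    have h1 : e^2 ≤ ε * e := by nlinarith
    have h2 : (1/ε) * e^2 ≤ (1/ε) * (ε * e) := by nlinarith
    have h3 : (1/ε) * (ε * e) = e := by field_simp
    nlinarith
  set A : Fin 2 → ℝ × ℝ := ![(0, e^2), (2, 2 + e^2)] with hA
  have hA0 : A 0 = (0, e^2) := by simp [hA]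
  have hA1 : A 1 = (2, 2 + e^2) := by simp [hA]
  have hAval : ∀ i, (A i).1 ≤ (A i).2 := by
    intro i
    fin_cases i <;> simp [hA] <;> nlinarith
  rcases le_or_gt (f A) 1 with hc | hc
  · -- window misses agent 2's interval [2, 2+e²] completely
    set J : ℝ × ℝ := (2 - e, 2 + e^2 + e) with hJ
    have hJval : J.1 ≤ J.2 := by simp [hJ]; nlinarith
    have htr : icost 2 (2 + e^2) (f A) ≤ icost 2 (2 + e^2) (f (Function.update A 1 J)) := by
      have h := hf A hAval 1 J hJval
      rw [hA1] at h
      exact h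
    set B : Fin 2 → ℝ × ℝ := Function.update A 1 J with hB
    have hB0 : B 0 = (0, e^2) := by
      rw [hB, Function.update_of_ne (by decide), hA0]
    have hB1 : B 1 = (2 - e, 2 + e^2 + e) := by
      rw [hB, Function.update_self]
    have hmissA : icost 2 (2 + e^2) (f A) = (2 + e^2) - 2 :=
      icost_miss _ _ _ (Or.inr (by linarith))
    have hmissB : (2 + e^2) ≤ f B ∨ f B + 1 ≤ 2 := by
      apply miss_of_cost_eq 2 (2 + e^2) (f B) (by nlinarith)
      rw [hB]
      linarith [htr]
    have hcov : min (2 + e^2 + e) (f B + 1) - max (2 - e) (f B) ≤ e := by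
      rcases hmissB with h | h
      · have h2 := min_le_left (2 + e^2 + e) (f B + 1)
        have h3 := le_max_right (2 - e) (f B)
        linarith
      · have h2 := min_le_right (2 + e^2 + e) (f B + 1)
        have h3 := le_max_left (2 - e) (f B)
        linarith
    have hc2 : e^2 + e ≤ icost (2 - e) (2 + e^2 + e) (f B) := by
      have := icost_ge (2 - e) (2 + e^2 + e) (f B) e he0.le hcov
      linarith
    have hBval : ∀ i, (B i).1 ≤ (B i).2 := by
      intro i
      fin_cases i
      · rw [show B ⟨0, by norm_num⟩ = B 0 from rfl, hB0]; dsimp only; nlinarith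
      · rw [show B ⟨1, by norm_num⟩ = B 1 from rfl, hB1]; dsimp only; nlinarith
    have hSCdef : ∀ c : ℝ, SC2 B c = icost 0 (e^2) c + icost (2-e) (2+e^2+e) c := by
      intro c
      simp [SC2, Fin.sum_univ_two, hB0, hB1]
    refine ⟨B, hBval, 2 - e, ?_, ?_⟩
    · rw [hSCdef]
      have h1 : icost 0 (e^2) (2 - e) = e^2 - 0 :=
        icost_miss _ _ _ (Or.inl (by nlinarith))
      have h2 : icost (2-e) (2+e^2+e) (2-e) = 0 :=
        icost_full _ _ _ (by nlinarith) le_rfl (by nlinarith)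
      nlinarith
    · have hnum : SC2 B (2 - e) = e^2 := by
        rw [hSCdef]
        have h1 : icost 0 (e^2) (2 - e) = e^2 - 0 :=
          icost_miss _ _ _ (Or.inl (by nlinarith))
        have h2 : icost (2-e) (2+e^2+e) (2-e) = 0 :=
          icost_full _ _ _ (by nlinarith) le_rfl (by nlinarith)
        linarith
      rw [hnum, hSCdef]
      have hpos := icost_nonneg 0 (e^2) (f B) (by positivity)
      exact hfinal _ (by linarith)
  · -- window misses agent 1's interval [0, e²] completely
    set J : ℝ × ℝ := (-e, e^2 + e) with hJ
    have hJval : J.1 ≤ J.2 := by simp [hJ]; nlinarith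
    have htr : icost 0 (e^2) (f A) ≤ icost 0 (e^2) (f (Function.update A 0 J)) := by
      have h := hf A hAval 0 J hJval
      rw [hA0] at h
      exact h
    set B : Fin 2 → ℝ × ℝ := Function.update A 0 J with hB
    have hB0 : B 0 = (-e, e^2 + e) := by
      rw [hB, Function.update_self]
    have hB1 : B 1 = (2, 2 + e^2) := by
      rw [hB, Function.update_of_ne (by decide), hA1]
    have hmissA : icost 0 (e^2) (f A) = e^2 - 0 :=
      icost_miss _ _ _ (Or.inl (by nlinarith))
    have hmissB : (e^2) ≤ f B ∨ f B + 1 ≤ 0 := by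
      apply miss_of_cost_eq 0 (e^2) (f B) (by positivity)
      rw [hB]
      linarith [htr]
    have hcov : min (e^2 + e) (f B + 1) - max (-e) (f B) ≤ e := by
      rcases hmissB with h | h
      · have h2 := min_le_left (e^2 + e) (f B + 1)
        have h3 := le_max_right (-e) (f B)
        linarith
      · have h2 := min_le_right (e^2 + e) (f B + 1)
        have h3 := le_max_left (-e) (f B)
        linarith
    have hc2 : e^2 + e ≤ icost (-e) (e^2 + e) (f B) := by
      have := icost_ge (-e) (e^2 + e) (f B) e he0.le hcov
      linarith
    have hBval : ∀ i, (B i).1 ≤ (B i).2 := by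
      intro i
      fin_cases i
      · rw [show B ⟨0, by norm_num⟩ = B 0 from rfl, hB0]; dsimp only; nlinarith
      · rw [show B ⟨1, by norm_num⟩ = B 1 from rfl, hB1]; dsimp only; nlinarith
    have hSCdef : ∀ c : ℝ, SC2 B c = icost (-e) (e^2+e) c + icost 2 (2+e^2) c := by
      intro c
      simp [SC2, Fin.sum_univ_two, hB0, hB1]
    refine ⟨B, hBval, -e, ?_, ?_⟩
    · rw [hSCdef]
      have h1 : icost (-e) (e^2+e) (-e) = 0 :=
        icost_full _ _ _ (by nlinarith) le_rfl (by nlinarith)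
      have h2 : icost 2 (2+e^2) (-e) = (2+e^2) - 2 :=
        icost_miss _ _ _ (Or.inr (by nlinarith))
      nlinarith
    · have hnum : SC2 B (-e) = e^2 := by
        rw [hSCdef]
        have h1 : icost (-e) (e^2+e) (-e) = 0 :=
          icost_full _ _ _ (by nlinarith) le_rfl (by nlinarith)
        have h2 : icost 2 (2+e^2) (-e) = (2+e^2) - 2 :=
          icost_miss _ _ _ (Or.inr (by nlinarith))
        linarith
      rw [hnum, hSCdef]
      have hpos := icost_nonneg 2 (2+e^2) (f B) (by nlinarith)
      exact hfinal _ (by linarith)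
end

section
/- For all integers m ≥ 1 and k ≥ 1, consider the known-lengths instance with k agents whose interval is [0, 1] and k·m agents whose interval is [1, 1 + 1/m], and a covering interval of length 1. Then: (i) the total length of the intervals of the first k agents equals exactly half of the total length of all intervals, while the total length of any proper prefix (in left-to-right order) of the first k agents is strictly less than half, so the Weighted-Median mechanism places the covering interval at position 0; (ii) SC(0) = k; (iii) SC(1/m) = k/m > 0. Consequently SC(0) = m · SC(1/m), so the approximation ratio of the Weighted-Median mechanism is at least m; since m is arbitrary, its approximation ratio is unbounded (at least 1/ε for every ε ∈ (0,1) of the form 1/m). -/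
open Finset

/-- Left endpoints in the bad instance for Weighted-Median: `k` agents with
interval `[0, 1]` followed by `k·m` agents with interval `[1, 1 + 1/m]`. -/
noncomputable def wmStart (k m : ℕ) : Fin (k + k * m) → ℝ :=
  fun i => if (i : ℕ) < k then 0 else 1

/-- Known interval lengths in the bad instance: `1` for the first `k` agents and
`1/m` for the remaining `k·m` agents. -/
noncomputable def wmLen (k m : ℕ) : Fin (k + k * m) → ℝ :=
  fun i => if (i : ℕ) < k then 1 else 1 / (m : ℝ)

/-- Cost of agent `i` when the unit covering interval is placed at `c`:
the uncovered length of her interval `[start i, start i + len i]`. -/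
noncomputable def wmCost (k m : ℕ) (i : Fin (k + k * m)) (c : ℝ) : ℝ :=
  wmLen k m i - max 0 (min (wmStart k m i + wmLen k m i) (c + 1) - max (wmStart k m i) c)

/-- Social cost of position `c` in the bad instance. -/
noncomputable def wmSC (k m : ℕ) (c : ℝ) : ℝ :=
  ∑ i, wmCost k m i c

theorem sum_fin_ite (a b : ℝ) (n k : ℕ) (h : k ≤ n) :
    (∑ i : Fin n, if (i:ℕ) < k then a else b) = k * a + (n - k : ℕ) * b := by
  rw [Fin.sum_univ_eq_sum_range (fun j => if j < k then a else b)]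
  rw [Finset.range_eq_Ico, ← Finset.sum_Ico_consecutive _ (Nat.zero_le k) h]
  rw [Finset.sum_congr rfl (fun j hj => if_pos (by simp at hj; omega)),
      Finset.sum_congr rfl (g := fun _ => b) (fun j hj => if_neg (by simp at hj; omega))]
  simp [Nat.card_Ico, mul_comm]

theorem prefix_sum (k m j : ℕ) (hj : j ≤ k) :
    (∑ i ∈ univ.filter (fun i : Fin (k + k * m) => (i : ℕ) < j), wmLen k m i) = j := by
  rw [Finset.sum_filter]
  have h1 : ∀ i : Fin (k + k * m),
      (if (i:ℕ) < j then wmLen k m i else 0) = if (i:ℕ) < j then 1 else 0 := by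
    intro i
    simp only [wmLen]
    split_ifs with h1 h2 <;> first | rfl | omega
  rw [Finset.sum_congr rfl (fun i _ => h1 i), sum_fin_ite 1 0 _ j (by omega)]
  simp

theorem cost_ite (k m : ℕ) (i : Fin (k + k * m)) (c : ℝ) :
    wmCost k m i c = if (i:ℕ) < k then (1 - max 0 (min 1 (c+1) - max 0 c))
      else (1/(m:ℝ) - max 0 (min (1 + 1/(m:ℝ)) (c+1) - max 1 c)) := by
  simp only [wmCost, wmStart, wmLen]
  split_ifs <;> ring_nf

/-- The Weighted-Median mechanism has unbounded approximation ratio for known but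
unequal interval lengths. In the instance with `k` agents with interval `[0,1]`
and `k·m` agents with interval `[1, 1 + 1/m]`:
(i) the total length of the first `k` agents is exactly half of the total length,
every proper prefix of them has total length strictly below half, and hence the
Weighted-Median agent `i*` (the leftmost agent at which the prefix sums of lengths
first reach half of the total) starts at position `0`;
(ii) `SC(0) = k`; (iii) `SC(1/m) = k/m > 0`; and consequently
`SC(0) = m · SC(1/m)`, so the ratio is at least `m`. -/
theorem weighted_median_unbounded (m k : ℕ) (hm : 1 ≤ m) (hk : 1 ≤ k) :
    -- (i) the first k agents carry exactly half the total length ...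
    (∑ i ∈ univ.filter (fun i : Fin (k + k * m) => (i : ℕ) < k), wmLen k m i) =
        (1 / 2) * ∑ i, wmLen k m i ∧
    -- ... and every proper prefix of them strictly less than half ...
    (∀ j : ℕ, j < k →
      (∑ i ∈ univ.filter (fun i : Fin (k + k * m) => (i : ℕ) < j), wmLen k m i) <
        (1 / 2) * ∑ i, wmLen k m i) ∧
    (∃ istar : Fin (k + k * m),
      (1 / 2) * (∑ i, wmLen k m i) ≤
        (∑ i ∈ univ.filter (fun i => i ≤ istar), wmLen k m i) ∧
      (∑ i ∈ univ.filter (fun i => i < istar), wmLen k m i) <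
        (1 / 2) * (∑ i, wmLen k m i) ∧
      wmStart k m istar = 0) ∧
    -- (ii) the social cost of the Weighted-Median position 0 is k
    wmSC k m 0 = (k : ℝ) ∧
    -- (iii) the optimal position 1/m has social cost k/m > 0
    wmSC k m (1 / (m : ℝ)) = (k : ℝ) / (m : ℝ) ∧
    0 < (k : ℝ) / (m : ℝ) ∧
    -- consequently the approximation ratio is at least m
    wmSC k m 0 = (m : ℝ) * wmSC k m (1 / (m : ℝ)) := by
  have hmR : (0:ℝ) < m := by exact_mod_cast Nat.lt_of_lt_of_le Nat.zero_lt_one hm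
  have hm1 : (1:ℝ) ≤ m := by exact_mod_cast hm
  have hkR : (0:ℝ) < k := by exact_mod_cast Nat.lt_of_lt_of_le Nat.zero_lt_one hk
  have hsub : (k + k * m - k : ℕ) = k * m := by omega
  have htot : (∑ i, wmLen k m i) = 2 * (k:ℝ) := by
    simp only [wmLen]
    rw [sum_fin_ite 1 (1/(m:ℝ)) _ k (by omega), hsub]
    push_cast
    field_simp
    ring
  have hinv0 : (0:ℝ) ≤ 1/(m:ℝ) := by positivity
  have hmin1 : min (1 + 1/(m:ℝ)) (0 + 1) = 1 := by
    rw [zero_add]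
    exact min_eq_right (by linarith)
  have hinv1 : 1/(m:ℝ) ≤ 1 := by rw [div_le_one hmR]; exact hm1
  have hSC0 : wmSC k m 0 = (k : ℝ) := by
    simp only [wmSC]
    rw [Finset.sum_congr rfl (fun i _ => cost_ite k m i 0),
        sum_fin_ite _ _ _ k (by omega), hsub, hmin1]
    norm_num
    field_simp
  have hSC1 : wmSC k m (1/(m:ℝ)) = (k : ℝ) / (m : ℝ) := by
    simp only [wmSC]
    rw [Finset.sum_congr rfl (fun i _ => cost_ite k m i (1/(m:ℝ))),
        sum_fin_ite _ _ _ k (by omega), hsub]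
    have e1 : min 1 (1/(m:ℝ) + 1) = 1 := min_eq_left (by linarith)
    have e2 : max 0 (1/(m:ℝ)) = 1/(m:ℝ) := max_eq_right hinv0
    have e3 : max 0 (1 - 1/(m:ℝ)) = 1 - 1/(m:ℝ) := max_eq_right (by linarith)
    have e4 : min (1 + 1/(m:ℝ)) (1/(m:ℝ) + 1) = 1 + 1/(m:ℝ) := by
      rw [add_comm (1/(m:ℝ)) 1, min_self]
    have e5 : max 1 (1/(m:ℝ)) = 1 := max_eq_left hinv1
    rw [e1, e2, e3, e4, e5]
    have e6 : max (0:ℝ) (1 + 1/(m:ℝ) - 1) = 1/(m:ℝ) := by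
      rw [max_eq_right (by linarith)]; ring
    rw [e6]
    ring
  refine ⟨?_, ?_, ?_, hSC0, hSC1, by positivity, ?_⟩
  · rw [prefix_sum k m k le_rfl, htot]; ring
  · intro j hj
    rw [prefix_sum k m j (le_of_lt hj), htot]
    have : (j:ℝ) < k := by exact_mod_cast hj
    linarith
  · refine ⟨⟨k - 1, by omega⟩, ?_, ?_, ?_⟩
    · have hfe : univ.filter (fun i : Fin (k + k * m) => i ≤ ⟨k - 1, by omega⟩) =
          univ.filter (fun i : Fin (k + k * m) => (i : ℕ) < k) := by
        apply Finset.filter_congr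
        intro i _
        simp only [Fin.le_def]
        omega
      rw [hfe, prefix_sum k m k le_rfl, htot]
      linarith
    · have hfe : univ.filter (fun i : Fin (k + k * m) => i < ⟨k - 1, by omega⟩) =
          univ.filter (fun i : Fin (k + k * m) => (i : ℕ) < k - 1) := by
        apply Finset.filter_congr
        intro i _
        simp only [Fin.lt_def]
        try omega
      rw [hfe, prefix_sum k m (k-1) (by omega), htot]
      have : ((k-1 : ℕ):ℝ) < k := by exact_mod_cast Nat.sub_lt (by omega) one_pos
      linarith
    · simp only [wmStart]
      rw [if_pos]
      omega
  · rw [hSC0, hSC1]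
    field_simp
end
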